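/- Let α > 1/4, ξ ∈ ℝ and k ∈ ℤ with k ≠ 0, and define ℓ(t) = k(ξ−kt)/(k²+(ξ−kt)²) and p(t) = k/(k²+(ξ−kt)²)^{1/2}. Then there exist constants 0 < c ≤ C < ∞, depending only on α (in particular independent of k and ξ), such that every continuously differentiable solution (Z,Q) : ℝ → ℂ² of the system Z′(t) = (1/2)ℓ(t)Z(t) − √α·p(t)·Q(t), Q′(t) = √α·p(t)·Z(t) − (1/2)ℓ(t)Q(t) satisfies c·(|Z(s)|² + |Q(s)|²) ≤ |Z(t)|² + |Q(t)|² ≤ C·(|Z(s)|² + |Q(s)|²) for all s, t ∈ ℝ. -/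

import Mathlib

open Real Set

noncomputable section

/-- Fourier symbol `ℓ(t) = k(ξ−kt)/(k²+(ξ−kt)²)`. -/
def ell (ξ : ℝ) (k : ℤ) (t : ℝ) : ℝ :=
  ((k : ℝ) * (ξ - k * t)) / ((k : ℝ) ^ 2 + (ξ - k * t) ^ 2)

/-- Fourier symbol `p(t) = k/(k²+(ξ−kt)²)^{1/2}`. -/
def pp (ξ : ℝ) (k : ℤ) (t : ℝ) : ℝ :=
  (k : ℝ) / Real.sqrt ((k : ℝ) ^ 2 + (ξ - k * t) ^ 2)

namespace Stmt11

/-- `H(t) = (ξ-kt)/√(k²+(ξ-kt)²)`. -/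
def Hf (ξ : ℝ) (k : ℤ) (u : ℝ) : ℝ :=
  (ξ - k*u) / Real.sqrt ((k:ℝ)^2 + (ξ - k*u)^2)

/-- derivative of `Hf`. -/
def HfD (ξ : ℝ) (k : ℤ) (u : ℝ) : ℝ :=
  -(k:ℝ)^3 / (((k:ℝ)^2 + (ξ-k*u)^2) * Real.sqrt ((k:ℝ)^2 + (ξ-k*u)^2))

lemma Hf_hasDeriv (ξ : ℝ) (k : ℤ) (hk : k ≠ 0) (t : ℝ) :
    HasDerivAt (Hf ξ k) (HfD ξ k t) t := by
  have hk' : (k:ℝ) ≠ 0 := Int.cast_ne_zero.mpr hk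
  have hm : 0 < (k:ℝ)^2 + (ξ - k*t)^2 := by positivity
  have hw : HasDerivAt (fun u : ℝ => ξ - (k:ℝ)*u) (-(k:ℝ)) t := by
    simpa using ((hasDerivAt_id t).const_mul ((k:ℝ))).const_sub ξ
  have hm' : HasDerivAt (fun u => (k:ℝ)^2 + (ξ - (k:ℝ)*u)^2)
      (2*(ξ-(k:ℝ)*t)*(-(k:ℝ))) t := by
    simpa using (hw.pow 2).const_add ((k:ℝ)^2)
  have hsm : HasDerivAt (fun u => Real.sqrt ((k:ℝ)^2 + (ξ-(k:ℝ)*u)^2))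
      (1 / (2 * Real.sqrt ((k:ℝ)^2+(ξ-(k:ℝ)*t)^2)) * (2*(ξ-(k:ℝ)*t)*(-(k:ℝ)))) t :=
    (Real.hasDerivAt_sqrt hm.ne').comp t hm'
  have hs0 : 0 < Real.sqrt ((k:ℝ)^2+(ξ-(k:ℝ)*t)^2) := Real.sqrt_pos.mpr hm
  have hS2 : Real.sqrt ((k:ℝ)^2+(ξ-(k:ℝ)*t)^2) * Real.sqrt ((k:ℝ)^2+(ξ-(k:ℝ)*t)^2)
      = (k:ℝ)^2+(ξ-(k:ℝ)*t)^2 := Real.mul_self_sqrt hm.le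
  have h : HasDerivAt (fun u => (ξ - (k:ℝ)*u) / Real.sqrt ((k:ℝ)^2+(ξ-(k:ℝ)*u)^2)) _ t :=
    hw.div hsm hs0.ne'
  unfold Hf HfD
  convert h using 1
  set S := Real.sqrt ((k:ℝ)^2+(ξ-(k:ℝ)*t)^2)
  field_simp
  linear_combination ((ξ-(k:ℝ)*t)^2) * hS2

lemma Hf_abs_le_one (ξ : ℝ) (k : ℤ) (hk : k ≠ 0) (u : ℝ) : |Hf ξ k u| ≤ 1 := by
  have hk' : (k:ℝ) ≠ 0 := Int.cast_ne_zero.mpr hk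
  have hm : 0 < (k:ℝ)^2 + (ξ - k*u)^2 := by positivity
  have hs0 : 0 < Real.sqrt ((k:ℝ)^2+(ξ-(k:ℝ)*u)^2) := Real.sqrt_pos.mpr hm
  have h1 : |ξ-(k:ℝ)*u| ≤ Real.sqrt ((k:ℝ)^2+(ξ-(k:ℝ)*u)^2) := by
    rw [← Real.sqrt_sq_eq_abs]
    exact Real.sqrt_le_sqrt (by nlinarith)
  rw [Hf, abs_div, abs_of_pos hs0, div_le_one hs0]
  exact h1

/-- modified-energy weight `γ`. -/
def gam (a ξ : ℝ) (k : ℤ) (u : ℝ) : ℝ := Hf ξ k u / a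

def gamD (a ξ : ℝ) (k : ℤ) (u : ℝ) : ℝ := HfD ξ k u / a

lemma gam_hasDeriv (a ξ : ℝ) (k : ℤ) (hk : k ≠ 0) (t : ℝ) :
    HasDerivAt (gam a ξ k) (gamD a ξ k t) t :=
  (Hf_hasDeriv ξ k hk t).div_const a

def Efun (Z Q : ℝ → ℂ) (u : ℝ) : ℝ :=
  (Z u).re^2 + (Z u).im^2 + (Q u).re^2 + (Q u).im^2

def rfun (Z Q : ℝ → ℂ) (u : ℝ) : ℝ :=
  (Z u).re*(Q u).re + (Z u).im*(Q u).im

lemma key_rel (a ξ : ℝ) (ha : 0 < a) (k : ℤ) (hk : k ≠ 0) (u : ℝ) :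
    gam a ξ k u * (a * pp ξ k u) = ell ξ k u := by
  have hk' : (k:ℝ) ≠ 0 := Int.cast_ne_zero.mpr hk
  have hm : 0 < (k:ℝ)^2 + (ξ - k*u)^2 := by positivity
  have hs0 : 0 < Real.sqrt ((k:ℝ)^2+(ξ-(k:ℝ)*u)^2) := Real.sqrt_pos.mpr hm
  have hS2 : Real.sqrt ((k:ℝ)^2+(ξ-(k:ℝ)*u)^2) * Real.sqrt ((k:ℝ)^2+(ξ-(k:ℝ)*u)^2)
      = (k:ℝ)^2+(ξ-(k:ℝ)*u)^2 := Real.mul_self_sqrt hm.le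
  unfold gam Hf pp ell
  field_simp
  rw [Real.sq_sqrt hm.le]


lemma Phi_hasDeriv (a ξ : ℝ) (ha : 0 < a) (k : ℤ) (hk : k ≠ 0) (Z Q : ℝ → ℂ)
    (hZ : ∀ t : ℝ, HasDerivAt Z
        (((1 / 2 * ell ξ k t : ℝ) : ℂ) * Z t - ((a * pp ξ k t : ℝ) : ℂ) * Q t) t)
    (hQ : ∀ t : ℝ, HasDerivAt Q
        (((a * pp ξ k t : ℝ) : ℂ) * Z t - ((1 / 2 * ell ξ k t : ℝ) : ℂ) * Q t) t)
    (t : ℝ) :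
    HasDerivAt (fun u => Efun Z Q u - gam a ξ k u * rfun Z Q u)
      (-(gamD a ξ k t) * rfun Z Q t) t := by
  have hx1 : HasDerivAt (fun u => (Z u).re)
      ((1/2 * ell ξ k t)*(Z t).re - (a * pp ξ k t)*(Q t).re) t := by
    have h := Complex.reCLM.hasFDerivAt.comp_hasDerivAt t (hZ t)
    simpa [Function.comp_def] using h
  have hx2 : HasDerivAt (fun u => (Z u).im)
      ((1/2 * ell ξ k t)*(Z t).im - (a * pp ξ k t)*(Q t).im) t := by
    have h := Complex.imCLM.hasFDerivAt.comp_hasDerivAt t (hZ t)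
    simpa [Function.comp_def] using h
  have hy1 : HasDerivAt (fun u => (Q u).re)
      ((a * pp ξ k t)*(Z t).re - (1/2 * ell ξ k t)*(Q t).re) t := by
    have h := Complex.reCLM.hasFDerivAt.comp_hasDerivAt t (hQ t)
    simpa [Function.comp_def] using h
  have hy2 : HasDerivAt (fun u => (Q u).im)
      ((a * pp ξ k t)*(Z t).im - (1/2 * ell ξ k t)*(Q t).im) t := by
    have h := Complex.imCLM.hasFDerivAt.comp_hasDerivAt t (hQ t)
    simpa [Function.comp_def] using h
  have h := ((((hx1.pow 2).add (hx2.pow 2)).add (hy1.pow 2)).add (hy2.pow 2)).sub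
    ((gam_hasDeriv a ξ k hk t).mul ((hx1.mul hy1).add (hx2.mul hy2)))
  refine h.congr_deriv ?_
  have hrel := key_rel a ξ ha k hk t
  unfold rfun
  simp only [Pi.mul_apply, Pi.add_apply]
  linear_combination (-((Z t).re^2 + (Z t).im^2 - (Q t).re^2 - (Q t).im^2)) * hrel


lemma gamD_abs (a ξ : ℝ) (ha : 0 < a) (k : ℤ) (hk : k ≠ 0) (u : ℝ) :
    (-(if 0 < k then (1:ℝ) else -1)) * gamD a ξ k u = |gamD a ξ k u| := by
  have hk' : (k:ℝ) ≠ 0 := Int.cast_ne_zero.mpr hk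
  have hm : 0 < (k:ℝ)^2 + (ξ - k*u)^2 := by positivity
  have hs0 : 0 < Real.sqrt ((k:ℝ)^2+(ξ-(k:ℝ)*u)^2) := Real.sqrt_pos.mpr hm
  rcases hk.lt_or_gt with h | h
  · have hkneg : (k:ℝ) < 0 := by exact_mod_cast h
    rw [if_neg (by omega)]
    have hge : 0 ≤ gamD a ξ k u := by
      unfold gamD HfD
      apply div_nonneg _ ha.le
      apply div_nonneg _ (by positivity)
      nlinarith [sq_nonneg (k:ℝ)]
    rw [abs_of_nonneg hge]; ring
  · rw [if_pos h]
    have hkpos : (0:ℝ) < (k:ℝ) := by exact_mod_cast h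
    have hle : gamD a ξ k u ≤ 0 := by
      unfold gamD HfD
      apply div_nonpos_of_nonpos_of_nonneg _ ha.le
      apply div_nonpos_of_nonpos_of_nonneg _ (by positivity)
      nlinarith [sq_nonneg (k:ℝ)]
    rw [abs_of_nonpos hle]; ring

/-- the comparison constant. -/
def cst (a : ℝ) : ℝ :=
  Real.exp (4 * (1 / (2 * (1 - 1 / (2 * a))))) *
    ((1 + 1 / (2 * a)) / (1 - 1 / (2 * a)))

lemma aux_main (a : ℝ) (ha : 1/2 < a) (ξ : ℝ) (k : ℤ) (hk : k ≠ 0)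
    (Z Q : ℝ → ℂ)
    (hZ : ∀ t : ℝ, HasDerivAt Z
        (((1 / 2 * ell ξ k t : ℝ) : ℂ) * Z t - ((a * pp ξ k t : ℝ) : ℂ) * Q t) t)
    (hQ : ∀ t : ℝ, HasDerivAt Q
        (((a * pp ξ k t : ℝ) : ℂ) * Z t - ((1 / 2 * ell ξ k t : ℝ) : ℂ) * Q t) t)
    (s t : ℝ) :
    Efun Z Q t ≤ cst a * Efun Z Q s := by
  have ha0 : 0 < a := by linarith
  unfold cst
  set b := 1 / (2 * a) with hbdef
  have hb0 : 0 < b := by rw [hbdef]; positivity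
  have hb1 : b < 1 := by rw [hbdef, div_lt_one (by linarith)]; linarith
  have h1b : 0 < 1 - b := by linarith
  set c₁ := 1 / (2 * (1 - b)) with hc₁def
  have hc₁0 : 0 < c₁ := by rw [hc₁def]; positivity
  set σ := if 0 < k then (1:ℝ) else -1 with hσdef
  set Φ : ℝ → ℝ := fun u => Efun Z Q u - gam a ξ k u * rfun Z Q u with hΦdef
  set G : ℝ → ℝ := fun u => (-σ * c₁) * gam a ξ k u with hGdef
  set g : ℝ → ℝ := fun u => c₁ * |gamD a ξ k u| with hgdef
  have hΦ : ∀ u, HasDerivAt Φ (-(gamD a ξ k u) * rfun Z Q u) u :=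
    fun u => Phi_hasDeriv a ξ ha0 k hk Z Q hZ hQ u
  have hG : ∀ u, HasDerivAt G (g u) u := by
    intro u
    have h := (gam_hasDeriv a ξ k hk u).const_mul (-σ * c₁)
    refine h.congr_deriv ?_
    have habs := gamD_abs a ξ ha0 k hk u
    rw [hσdef, hgdef]
    linear_combination c₁ * habs
  have hE0 : ∀ u, 0 ≤ Efun Z Q u := by
    intro u; simp only [Efun]; positivity
  have h2r : ∀ u, 2 * |rfun Z Q u| ≤ Efun Z Q u := by
    intro u
    have h : |rfun Z Q u| ≤ Efun Z Q u / 2 := by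
      rw [abs_le]
      constructor
      · simp only [Efun, rfun]
        nlinarith [sq_nonneg ((Z u).re + (Q u).re), sq_nonneg ((Z u).im + (Q u).im)]
      · simp only [Efun, rfun]
        nlinarith [sq_nonneg ((Z u).re - (Q u).re), sq_nonneg ((Z u).im - (Q u).im)]
    linarith
  have hgam : ∀ u, |gam a ξ k u| ≤ 2 * b := by
    intro u
    have h := Hf_abs_le_one ξ k hk u
    have he : |gam a ξ k u| = |Hf ξ k u| / a := by
      unfold gam; rw [abs_div, abs_of_pos ha0]
    rw [he, hbdef]
    calc |Hf ξ k u| / a ≤ 1 / a := by gcongr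
      _ = 2 * (1 / (2 * a)) := by field_simp
  have hΦ_lb : ∀ u, (1 - b) * Efun Z Q u ≤ Φ u := by
    intro u
    have h1 : gam a ξ k u * rfun Z Q u ≤ |gam a ξ k u| * |rfun Z Q u| := by
      calc gam a ξ k u * rfun Z Q u ≤ |gam a ξ k u * rfun Z Q u| := le_abs_self _
        _ = |gam a ξ k u| * |rfun Z Q u| := abs_mul _ _
    have h2 := hgam u
    have h3 := h2r u
    have h4 := abs_nonneg (rfun Z Q u)
    have h5 := mul_le_mul_of_nonneg_right h2 h4
    have h6 := mul_le_mul_of_nonneg_left h3 hb0.le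
    simp only [hΦdef]
    nlinarith
  have hΦ_ub : ∀ u, Φ u ≤ (1 + b) * Efun Z Q u := by
    intro u
    have h1 : -(gam a ξ k u * rfun Z Q u) ≤ |gam a ξ k u| * |rfun Z Q u| := by
      calc -(gam a ξ k u * rfun Z Q u) ≤ |gam a ξ k u * rfun Z Q u| := neg_le_abs _
        _ = |gam a ξ k u| * |rfun Z Q u| := abs_mul _ _
    have h2 := hgam u
    have h3 := h2r u
    have h4 := abs_nonneg (rfun Z Q u)
    have h5 := mul_le_mul_of_nonneg_right h2 h4
    have h6 := mul_le_mul_of_nonneg_left h3 hb0.le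
    simp only [hΦdef]
    nlinarith
  have hΦ0 : ∀ u, 0 ≤ Φ u := by
    intro u
    have := hΦ_lb u
    nlinarith [hE0 u]
  have hΦ'le : ∀ u, |-(gamD a ξ k u) * rfun Z Q u| ≤ g u * Φ u := by
    intro u
    rw [abs_mul, abs_neg]
    have hc₁eq : c₁ * (2 * (1 - b)) = 1 := by
      rw [hc₁def]; field_simp
    have h5 : |rfun Z Q u| ≤ c₁ * Φ u := by
      have h7 : c₁ * ((1 - b) * Efun Z Q u) = Efun Z Q u / 2 := by
        rw [hc₁def]; field_simp
      linarith [h2r u, mul_le_mul_of_nonneg_left (hΦ_lb u) hc₁0.le, h7]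
    calc |gamD a ξ k u| * |rfun Z Q u| ≤ |gamD a ξ k u| * (c₁ * Φ u) :=
          mul_le_mul_of_nonneg_left h5 (abs_nonneg _)
      _ = g u * Φ u := by simp only [hgdef]; ring
  have hψ : ∀ u, HasDerivAt (fun v => Φ v * Real.exp (-(G v)))
      ((-(gamD a ξ k u) * rfun Z Q u) * Real.exp (-(G u)) +
        Φ u * (Real.exp (-(G u)) * -(g u))) u :=
    fun u => (hΦ u).mul ((hG u).neg.exp)
  have hχ : ∀ u, HasDerivAt (fun v => Φ v * Real.exp (G v))
      ((-(gamD a ξ k u) * rfun Z Q u) * Real.exp (G u) +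
        Φ u * (Real.exp (G u) * g u)) u :=
    fun u => (hΦ u).mul ((hG u).exp)
  have hψ_anti : Antitone (fun v => Φ v * Real.exp (-(G v))) := by
    apply antitone_of_deriv_nonpos (fun u => (hψ u).differentiableAt)
    intro u
    rw [(hψ u).deriv]
    have h1 : -(gamD a ξ k u) * rfun Z Q u ≤ g u * Φ u :=
      le_trans (le_abs_self _) (hΦ'le u)
    nlinarith [Real.exp_pos (-(G u)), h1]
  have hχ_mono : Monotone (fun v => Φ v * Real.exp (G v)) := by
    apply monotone_of_deriv_nonneg (fun u => (hχ u).differentiableAt)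
    intro u
    rw [(hχ u).deriv]
    have h1 : -(g u * Φ u) ≤ -(gamD a ξ k u) * rfun Z Q u :=
      le_trans (neg_le_neg (hΦ'le u)) (neg_abs_le _)
    nlinarith [Real.exp_pos (G u), h1]
  have hGb : ∀ u, |G u| ≤ 2 * c₁ := by
    intro u
    simp only [hGdef]
    rw [abs_mul]
    have hσ1 : |(-σ * c₁)| = c₁ := by
      rw [hσdef]; split_ifs <;> simp [abs_of_nonneg hc₁0.le]
    rw [hσ1]
    nlinarith [hgam u, hb1, hc₁0, abs_nonneg (gam a ξ k u)]
  have hkey : ∀ s' t' : ℝ, Φ t' ≤ Real.exp (4 * c₁) * Φ s' := by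
    intro s' t'
    have hGd : G t' - G s' ≤ 4 * c₁ := by
      have h1 := abs_le.mp (hGb t')
      have h2 := abs_le.mp (hGb s')
      linarith [h1.1, h1.2, h2.1, h2.2]
    have hGd' : G s' - G t' ≤ 4 * c₁ := by
      have h1 := abs_le.mp (hGb t')
      have h2 := abs_le.mp (hGb s')
      linarith [h1.1, h1.2, h2.1, h2.2]
    rcases le_total s' t' with hle | hle
    · have h := hψ_anti hle
      simp only at h
      have e1 : Φ t' = (Φ t' * Real.exp (-(G t'))) * Real.exp (G t') := by
        rw [mul_assoc, ← Real.exp_add]; simp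
      rw [e1]
      calc (Φ t' * Real.exp (-(G t'))) * Real.exp (G t')
          ≤ (Φ s' * Real.exp (-(G s'))) * Real.exp (G t') :=
            mul_le_mul_of_nonneg_right h (Real.exp_pos _).le
        _ = Φ s' * Real.exp (G t' - G s') := by
            rw [mul_assoc, ← Real.exp_add]; ring_nf
        _ ≤ Φ s' * Real.exp (4 * c₁) :=
            mul_le_mul_of_nonneg_left (Real.exp_le_exp.mpr hGd) (hΦ0 s')
        _ = Real.exp (4 * c₁) * Φ s' := mul_comm _ _
    · have h := hχ_mono hle
      simp only at h
      have e1 : Φ t' = (Φ t' * Real.exp (G t')) * Real.exp (-(G t')) := by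
        rw [mul_assoc, ← Real.exp_add]; simp
      rw [e1]
      calc (Φ t' * Real.exp (G t')) * Real.exp (-(G t'))
          ≤ (Φ s' * Real.exp (G s')) * Real.exp (-(G t')) :=
            mul_le_mul_of_nonneg_right h (Real.exp_pos _).le
        _ = Φ s' * Real.exp (G s' - G t') := by
            rw [mul_assoc, ← Real.exp_add]; ring_nf
        _ ≤ Φ s' * Real.exp (4 * c₁) :=
            mul_le_mul_of_nonneg_left (Real.exp_le_exp.mpr hGd') (hΦ0 s')
        _ = Real.exp (4 * c₁) * Φ s' := mul_comm _ _
  have h1 := hkey s t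
  have h2 := hΦ_lb t
  have h3 := hΦ_ub s
  have h4 := mul_le_mul_of_nonneg_left h3 (Real.exp_pos (4 * c₁)).le
  have goal' : (1 - b) * Efun Z Q t ≤
      (1 - b) * ((Real.exp (4 * c₁) * ((1 + b) / (1 - b))) * Efun Z Q s) := by
    have heq : (1 - b) * ((Real.exp (4 * c₁) * ((1 + b) / (1 - b))) * Efun Z Q s)
        = Real.exp (4 * c₁) * ((1 + b) * Efun Z Q s) := by
      field_simp
    rw [heq]
    linarith
  exact le_of_mul_le_mul_left goal' h1b

end Stmt11

/-- Proposition: stability of the homogeneous problem: for `α > 1/4`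
there are constants `0 < c ≤ C`, depending only on `α`, such that for all `ξ ∈ ℝ`,
`k ∈ ℤ` with `k ≠ 0`, every `C¹` solution of
`Z′ = (1/2)ℓ Z − √α p Q`, `Q′ = √α p Z − (1/2)ℓ Q` satisfies
`c(|Z(s)|² + |Q(s)|²) ≤ |Z(t)|² + |Q(t)|² ≤ C(|Z(s)|² + |Q(s)|²)` for all `s, t ∈ ℝ`. -/
theorem statement11 (α : ℝ) (hα : 1 / 4 < α) :
    ∃ c C : ℝ, 0 < c ∧ c ≤ C ∧
      ∀ (ξ : ℝ) (k : ℤ), k ≠ 0 →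
      ∀ Z Q : ℝ → ℂ,
        (∀ t : ℝ, HasDerivAt Z
          (((1 / 2 * ell ξ k t : ℝ) : ℂ) * Z t -
            ((Real.sqrt α * pp ξ k t : ℝ) : ℂ) * Q t) t) →
        (∀ t : ℝ, HasDerivAt Q
          (((Real.sqrt α * pp ξ k t : ℝ) : ℂ) * Z t -
            ((1 / 2 * ell ξ k t : ℝ) : ℂ) * Q t) t) →
        ∀ s t : ℝ,
          c * (‖Z s‖ ^ 2 + ‖Q s‖ ^ 2) ≤
              ‖Z t‖ ^ 2 + ‖Q t‖ ^ 2 ∧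
            ‖Z t‖ ^ 2 + ‖Q t‖ ^ 2 ≤
              C * (‖Z s‖ ^ 2 + ‖Q s‖ ^ 2) := by
  set a := Real.sqrt α with hadef
  have ha : 1/2 < a := by
    have h0 : (0:ℝ) ≤ α := by linarith
    nlinarith [Real.sq_sqrt h0, Real.sqrt_nonneg α]
  have ha0 : 0 < a := by linarith
  have hb0 : 0 < 1 / (2 * a) := by positivity
  have hb1 : 1 / (2 * a) < 1 := by
    rw [div_lt_one (by linarith)]; linarith
  have h1b : 0 < 1 - 1 / (2 * a) := by linarith
  set C := Stmt11.cst a with hCdef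
  have hC1 : 1 ≤ C := by
    rw [hCdef]
    unfold Stmt11.cst
    have he : 1 ≤ Real.exp (4 * (1 / (2 * (1 - 1 / (2 * a))))) :=
      Real.one_le_exp (by positivity)
    have hd : 1 ≤ (1 + 1 / (2 * a)) / (1 - 1 / (2 * a)) := by
      rw [le_div_iff₀ h1b]; linarith
    nlinarith
  have hC0 : 0 < C := by linarith
  refine ⟨C⁻¹, C, by positivity, ?_, ?_⟩
  · calc C⁻¹ ≤ 1 := by rw [inv_le_one_iff₀]; exact Or.inr hC1
      _ ≤ C := hC1
  · intro ξ k hk Z Q hZ hQ s t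
    have hEeq : ∀ u : ℝ, ‖Z u‖ ^ 2 + ‖Q u‖ ^ 2
        = Stmt11.Efun Z Q u := by
      intro u
      simp only [Stmt11.Efun, Complex.sq_norm, Complex.normSq_apply]
      ring
    rw [hEeq s, hEeq t]
    constructor
    · have hswap := Stmt11.aux_main a ha ξ k hk Z Q hZ hQ t s
      have h5 : C⁻¹ * Stmt11.Efun Z Q s ≤ C⁻¹ * (C * Stmt11.Efun Z Q t) :=
        mul_le_mul_of_nonneg_left hswap (by positivity)
      have h6 : C⁻¹ * (C * Stmt11.Efun Z Q t) = Stmt11.Efun Z Q t := by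
        field_simp
      linarith
    · exact Stmt11.aux_main a ha ξ k hk Z Q hZ hQ s t
end
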